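/- (Reflection lemma for the N_f = 2 index.) Let q, a, v be complex numbers with 0 < |q| < 1, |q| < |a| < 1, v ≠ 0, and suppose that neither v² nor a/v² is an integer power of q. Then for every non-negative integer k, a^{−k} · (q^{1−k}v², a, a/v²; q)_∞ / [(v^{−2}, q^{1−k}/a, q^{1−k}v²/a, q; q)_∞] · Σ_{n=0}^∞ (q^{1−k}/a, q^{1−k}v²/a, q/a, qv²/a; q)_n (q^{1+n−k};q)_∞ a^{2n} / (q^{1−k}v², qv², q; q)_n = a^{k} · (q^{1+k}, q^{1+k}v², a, a/v²; q)_∞ / (v^{−2}, q^{1+k}/a, q^{1+k}v²/a, q; q)_∞ · Σ_{n=0}^∞ (q^{1+k}/a, q^{1+k}v²/a, q/a, qv²/a; q)_n a^{2n} / (q^{1+k}, q^{1+k}v², qv², q; q)_n. (Here the singular ratio (q^{1−k};q)_∞/(q^{1−k};q)_n appearing in the k ↦ −k summand is interpreted as (q^{1+n−k};q)_∞.) -/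

import Mathlib

open scoped BigOperators

/-- The infinite q-Pochhammer symbol `(z;q)_∞ = ∏_{j=0}^∞ (1 - z q^j)`. -/
noncomputable def qPochInf (z q : ℂ) : ℂ := ∏' j : ℕ, (1 - z * q ^ j)

/-- The q-Pochhammer symbol `(z;q)_n = (z;q)_∞ / (z q^n;q)_∞` for `n : ℤ`. -/
noncomputable def qPochInt (z q : ℂ) (n : ℤ) : ℂ :=
  qPochInf z q / qPochInf (z * q ^ n) q

lemma qPochInf_eq_zero {z q : ℂ} {j : ℕ} (h : z * q ^ j = 1) : qPochInf z q = 0 := by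
  have hp : HasProd (fun j : ℕ => 1 - z * q ^ j) 0 := by
    rw [HasProd]
    apply Filter.Tendsto.congr' _ tendsto_const_nhds
    filter_upwards [Filter.eventually_ge_atTop ({j} : Finset ℕ)] with s hs
    exact (Finset.prod_eq_zero (hs (Finset.mem_singleton_self j)) (by rw [h, sub_self])).symm
  exact hp.tprod_eq

lemma qPochInf_ne_zero {z q : ℂ} (hq1 : ‖q‖ < 1) (h : ∀ j : ℕ, z * q ^ j ≠ 1) :
    qPochInf z q ≠ 0 := by
  have hfn : ∀ j : ℕ, (1 : ℂ) - z * q ^ j ≠ 0 := by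
    intro j hj
    exact h j (by linear_combination -hj)
  have hsum : Summable fun j : ℕ => Complex.log (1 - z * q ^ j) := by
    have hgeo : Summable fun j : ℕ => (3/2 : ℝ) * (‖z‖ * ‖q‖ ^ j) :=
      ((summable_geometric_of_lt_one (norm_nonneg q) hq1).mul_left _).mul_left _
    apply hgeo.of_norm_bounded_eventually_nat
    have htend : Filter.Tendsto (fun j : ℕ => ‖z‖ * ‖q‖ ^ j)
        Filter.atTop (nhds 0) := by
      simpa using (tendsto_pow_atTop_nhds_zero_of_lt_one (norm_nonneg q) hq1).const_mul
        ‖z‖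
    filter_upwards [htend.eventually_le_const (by norm_num : (0:ℝ) < 1/2)] with j hj
    have h2 : ‖-(z * q ^ j)‖ ≤ 1/2 := by
      rw [norm_neg, norm_mul, norm_pow]; exact hj
    have := Complex.norm_log_one_add_half_le_self (z := -(z * q ^ j)) (by simpa using h2)
    rw [show (1 : ℂ) + -(z * q ^ j) = 1 - z * q ^ j by ring] at this
    simpa [norm_mul, norm_pow] using this
  have key := Complex.cexp_tsum_eq_tprod (f := fun j : ℕ => 1 - z * q ^ j) hfn hsum
  have := key
  rw [qPochInf, ← this]
  exact Complex.exp_ne_zero _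

set_option maxHeartbeats 1600000 in
theorem reflection_lemma_Nf2 (q a v : ℂ)
    (hq0 : 0 < ‖q‖) (hq1 : ‖q‖ < 1)
    (hqa : ‖q‖ < ‖a‖) (ha : ‖a‖ < 1)
    (hv : v ≠ 0)
    (hv2 : ∀ m : ℤ, v ^ 2 ≠ q ^ m)
    (hav2 : ∀ m : ℤ, a / v ^ 2 ≠ q ^ m)
    (k : ℕ) :
    a ^ (-(k : ℤ)) *
      ((qPochInf (q ^ (1 - (k : ℤ)) * v ^ 2) q * qPochInf a q * qPochInf (a / v ^ 2) q) /
       (qPochInf (v ^ (-2 : ℤ)) q * qPochInf (q ^ (1 - (k : ℤ)) / a) q *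
        qPochInf (q ^ (1 - (k : ℤ)) * v ^ 2 / a) q * qPochInf q q)) *
      (∑' n : ℕ,
        (qPochInt (q ^ (1 - (k : ℤ)) / a) q n * qPochInt (q ^ (1 - (k : ℤ)) * v ^ 2 / a) q n *
         qPochInt (q / a) q n * qPochInt (q * v ^ 2 / a) q n) *
        qPochInf (q ^ (1 + (n : ℤ) - (k : ℤ))) q * a ^ (2 * n) /
        (qPochInt (q ^ (1 - (k : ℤ)) * v ^ 2) q n * qPochInt (q * v ^ 2) q n *
         qPochInt q q n))
    = a ^ (k : ℤ) *
      ((qPochInf (q ^ (1 + (k : ℤ))) q * qPochInf (q ^ (1 + (k : ℤ)) * v ^ 2) q *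
        qPochInf a q * qPochInf (a / v ^ 2) q) /
       (qPochInf (v ^ (-2 : ℤ)) q * qPochInf (q ^ (1 + (k : ℤ)) / a) q *
        qPochInf (q ^ (1 + (k : ℤ)) * v ^ 2 / a) q * qPochInf q q)) *
      (∑' n : ℕ,
        (qPochInt (q ^ (1 + (k : ℤ)) / a) q n * qPochInt (q ^ (1 + (k : ℤ)) * v ^ 2 / a) q n *
         qPochInt (q / a) q n * qPochInt (q * v ^ 2 / a) q n) * a ^ (2 * n) /
        (qPochInt (q ^ (1 + (k : ℤ))) q n * qPochInt (q ^ (1 + (k : ℤ)) * v ^ 2) q n *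
         qPochInt (q * v ^ 2) q n * qPochInt q q n)) := by
  have hqne : q ≠ 0 := by
    intro h; rw [h] at hq0; simp at hq0
  have hane : a ≠ 0 := by
    intro h; rw [h] at hqa; simp at hqa; exact absurd hqa (not_lt.mpr hq0.le)
  have haq : ∀ m : ℤ, a ≠ q ^ m := by
    intro m hm
    have habs : ‖a‖ = ‖q‖ ^ m := by rw [hm, norm_zpow]
    rcases le_or_gt 1 m with h1 | h1
    · have : ‖q‖ ^ m ≤ ‖q‖ ^ (1:ℤ) :=
        zpow_le_zpow_right_of_le_one₀ hq0 hq1.le h1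
      rw [zpow_one] at this
      rw [habs] at hqa; linarith
    · have h0 : m ≤ 0 := by omega
      have : ‖q‖ ^ (0:ℤ) ≤ ‖q‖ ^ m :=
        zpow_le_zpow_right_of_le_one₀ hq0 hq1.le h0
      rw [zpow_zero] at this
      rw [habs] at ha; linarith
  have hqm : ∀ m : ℤ, 1 ≤ m → q ^ m ≠ 1 := by
    intro m hm h
    have : ‖q‖ ^ m ≤ ‖q‖ ^ (1:ℤ) :=
      zpow_le_zpow_right_of_le_one₀ hq0 hq1.le hm
    rw [zpow_one] at this
    rw [← norm_zpow, h] at this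
    simp at this; linarith
  -- non-vanishing families
  have NQ : ∀ e : ℤ, 1 ≤ e → qPochInf (q ^ e) q ≠ 0 := by
    intro e he
    apply qPochInf_ne_zero hq1
    intro j
    rw [← zpow_natCast q j, ← zpow_add₀ hqne]
    exact hqm _ (by omega)
  have NA : ∀ e : ℤ, qPochInf (q ^ e / a) q ≠ 0 := by
    intro e
    apply qPochInf_ne_zero hq1
    intro j h
    apply haq (e + j)
    rw [zpow_add₀ hqne, zpow_natCast]
    field_simp at h
    exact h.symm
  have NV : ∀ e : ℤ, qPochInf (q ^ e * v ^ 2) q ≠ 0 := by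
    intro e
    apply qPochInf_ne_zero hq1
    intro j h
    apply hv2 (-e - j)
    have hx : q ^ (-e - (j:ℤ)) = (q ^ e * q ^ (j:ℕ))⁻¹ := by
      rw [← zpow_natCast q j, ← zpow_add₀ hqne, ← zpow_neg]
      congr 1; ring
    rw [hx]
    exact eq_inv_of_mul_eq_one_left (by linear_combination h)
  have NVA : ∀ e : ℤ, qPochInf (q ^ e * v ^ 2 / a) q ≠ 0 := by
    intro e
    apply qPochInf_ne_zero hq1
    intro j h
    apply hav2 (e + j)
    rw [zpow_add₀ hqne, zpow_natCast]
    have hv2ne : v ^ 2 ≠ 0 := pow_ne_zero _ hv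
    field_simp at h
    rw [div_eq_iff hv2ne]
    linear_combination -h
  have NE : qPochInf (v ^ (-2:ℤ)) q ≠ 0 := by
    apply qPochInf_ne_zero hq1
    intro j h
    apply hv2 j
    rw [zpow_natCast]
    have hinv : (v : ℂ) ^ (-2:ℤ) = (v ^ 2)⁻¹ := by rw [zpow_neg, zpow_two, pow_two]
    rw [hinv] at h
    have hv2ne : v ^ 2 ≠ 0 := pow_ne_zero _ hv
    exact (inv_mul_eq_one₀ hv2ne).mp h
  have NAq : qPochInf a q ≠ 0 := by
    apply qPochInf_ne_zero hq1
    intro j h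
    apply haq (-j)
    rw [zpow_neg, zpow_natCast]
    exact eq_inv_of_mul_eq_one_left h
  have NG : qPochInf (a / v ^ 2) q ≠ 0 := by
    apply qPochInf_ne_zero hq1
    intro j h
    apply hav2 (-j)
    rw [zpow_neg, zpow_natCast]
    exact eq_inv_of_mul_eq_one_left h
  have NQ1 : qPochInf q q ≠ 0 := by
    have := NQ 1 le_rfl; rwa [zpow_one] at this
  have NV1 : qPochInf (q * v ^ 2) q ≠ 0 := by
    have := NV 1; rwa [zpow_one] at this
  have NA1 : qPochInf (q / a) q ≠ 0 := by
    have := NA 1; rwa [zpow_one] at this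
  have NVA1 : qPochInf (q * v ^ 2 / a) q ≠ 0 := by
    have := NVA 1; rwa [zpow_one] at this
  rw [← tsum_mul_left, ← tsum_mul_left]
  refine Eq.trans (Function.Injective.tsum_eq (g := fun m : ℕ => m + k)
    (add_left_injective k) ?_).symm (tsum_congr fun m => ?_)
  · -- support condition
    intro x hx
    simp only [Function.mem_support] at hx
    rcases le_or_gt k x with hkx | hkx
    · exact ⟨x - k, by show x - k + k = x; omega⟩
    · exfalso
      apply hx
      have h0 : qPochInf (q ^ (1 + (x:ℤ) - (k:ℤ))) q = 0 :=
        qPochInf_eq_zero (j := k - 1 - x)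
          (by rw [← zpow_natCast q (k - 1 - x), ← zpow_add₀ hqne,
                show (1 + (x:ℤ) - k) + ((k-1-x:ℕ):ℤ) = 0 by omega, zpow_zero])
      rw [h0]
      ring
  · -- termwise identity
    simp only [qPochInt]
    have h1 : q ^ (1 - (k:ℤ)) / a * q ^ (((m+k : ℕ)) : ℤ) = q ^ (1+(m:ℤ)) / a := by
      rw [show (q:ℂ) ^ (1+(m:ℤ)) = q ^ (1 - (k:ℤ)) * q ^ (((m+k : ℕ)) : ℤ) by
        rw [← zpow_add₀ hqne]; congr 1; push_cast; ring]
      ring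
    have h2 : q ^ (1 - (k:ℤ)) * v ^ 2 / a * q ^ (((m+k : ℕ)) : ℤ)
        = q ^ (1+(m:ℤ)) * v ^ 2 / a := by
      rw [show (q:ℂ) ^ (1+(m:ℤ)) = q ^ (1 - (k:ℤ)) * q ^ (((m+k : ℕ)) : ℤ) by
        rw [← zpow_add₀ hqne]; congr 1; push_cast; ring]
      ring
    have h3 : q / a * q ^ (((m+k : ℕ)) : ℤ) = q ^ (1+(m:ℤ)+(k:ℤ)) / a := by
      rw [show (q:ℂ) ^ (1+(m:ℤ)+(k:ℤ)) = q * q ^ (((m+k : ℕ)) : ℤ) by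
        rw [show (1+(m:ℤ)+(k:ℤ)) = 1 + (((m+k : ℕ)) : ℤ) by push_cast; ring,
          zpow_one_add₀ hqne]]
      ring
    have h4 : q * v ^ 2 / a * q ^ (((m+k : ℕ)) : ℤ) = q ^ (1+(m:ℤ)+(k:ℤ)) * v ^ 2 / a := by
      rw [show (q:ℂ) ^ (1+(m:ℤ)+(k:ℤ)) = q * q ^ (((m+k : ℕ)) : ℤ) by
        rw [show (1+(m:ℤ)+(k:ℤ)) = 1 + (((m+k : ℕ)) : ℤ) by push_cast; ring,
          zpow_one_add₀ hqne]]
      ring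
    have h5 : q ^ (1 - (k:ℤ)) * v ^ 2 * q ^ (((m+k : ℕ)) : ℤ) = q ^ (1+(m:ℤ)) * v ^ 2 := by
      rw [show (q:ℂ) ^ (1+(m:ℤ)) = q ^ (1 - (k:ℤ)) * q ^ (((m+k : ℕ)) : ℤ) by
        rw [← zpow_add₀ hqne]; congr 1; push_cast; ring]
      ring
    have h6 : q * v ^ 2 * q ^ (((m+k : ℕ)) : ℤ) = q ^ (1+(m:ℤ)+(k:ℤ)) * v ^ 2 := by
      rw [show (q:ℂ) ^ (1+(m:ℤ)+(k:ℤ)) = q * q ^ (((m+k : ℕ)) : ℤ) by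
        rw [show (1+(m:ℤ)+(k:ℤ)) = 1 + (((m+k : ℕ)) : ℤ) by push_cast; ring,
          zpow_one_add₀ hqne]]
      ring
    have h7 : q * q ^ (((m+k : ℕ)) : ℤ) = q ^ (1+(m:ℤ)+(k:ℤ)) := by
      rw [show (1+(m:ℤ)+(k:ℤ)) = 1 + (((m+k : ℕ)) : ℤ) by push_cast; ring,
        zpow_one_add₀ hqne]
    have h8 : q ^ (1 + ((m+k:ℕ):ℤ) - (k:ℤ)) = q ^ (1+(m:ℤ)) := by
      congr 1; push_cast; ring
    have g1 : q ^ (1 + (k:ℤ)) / a * q ^ ((m:ℕ) : ℤ) = q ^ (1+(m:ℤ)+(k:ℤ)) / a := by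
      rw [show (q:ℂ) ^ (1+(m:ℤ)+(k:ℤ)) = q ^ (1 + (k:ℤ)) * q ^ ((m:ℕ) : ℤ) by
        rw [← zpow_add₀ hqne]; congr 1; push_cast; ring]
      ring
    have g2 : q ^ (1 + (k:ℤ)) * v ^ 2 / a * q ^ ((m:ℕ) : ℤ)
        = q ^ (1+(m:ℤ)+(k:ℤ)) * v ^ 2 / a := by
      rw [show (q:ℂ) ^ (1+(m:ℤ)+(k:ℤ)) = q ^ (1 + (k:ℤ)) * q ^ ((m:ℕ) : ℤ) by
        rw [← zpow_add₀ hqne]; congr 1; push_cast; ring]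
      ring
    have g3 : q / a * q ^ ((m:ℕ) : ℤ) = q ^ (1+(m:ℤ)) / a := by
      rw [show (q:ℂ) ^ (1+(m:ℤ)) = q * q ^ ((m:ℕ) : ℤ) by rw [zpow_one_add₀ hqne]]
      ring
    have g4 : q * v ^ 2 / a * q ^ ((m:ℕ) : ℤ) = q ^ (1+(m:ℤ)) * v ^ 2 / a := by
      rw [show (q:ℂ) ^ (1+(m:ℤ)) = q * q ^ ((m:ℕ) : ℤ) by rw [zpow_one_add₀ hqne]]
      ring
    have g5 : q ^ (1 + (k:ℤ)) * q ^ ((m:ℕ) : ℤ) = q ^ (1+(m:ℤ)+(k:ℤ)) := by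
      rw [← zpow_add₀ hqne]; congr 1; push_cast; ring
    have g6 : q ^ (1 + (k:ℤ)) * v ^ 2 * q ^ ((m:ℕ) : ℤ) = q ^ (1+(m:ℤ)+(k:ℤ)) * v ^ 2 := by
      rw [show (q:ℂ) ^ (1+(m:ℤ)+(k:ℤ)) = q ^ (1 + (k:ℤ)) * q ^ ((m:ℕ) : ℤ) by
        rw [← zpow_add₀ hqne]; congr 1; push_cast; ring]
      ring
    have g7 : q * v ^ 2 * q ^ ((m:ℕ) : ℤ) = q ^ (1+(m:ℤ)) * v ^ 2 := by
      rw [show (q:ℂ) ^ (1+(m:ℤ)) = q * q ^ ((m:ℕ) : ℤ) by rw [zpow_one_add₀ hqne]]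
      ring
    have g8 : q * q ^ ((m:ℕ) : ℤ) = q ^ (1+(m:ℤ)) := by
      rw [zpow_one_add₀ hqne]
    rw [h1, h2, h3, h4, h5, h6, h7, h8, g1, g2, g3, g4, g5, g6, g7, g8]
    rw [show (a:ℂ) ^ (-(k:ℤ)) = (a ^ k)⁻¹ by rw [zpow_neg, zpow_natCast],
      show (a:ℂ) ^ (k:ℤ) = a ^ k from zpow_natCast a k]
    have n1 := NA (1 - (k:ℤ)); have n2 := NA (1 + (m:ℤ)); have n3 := NA (1+(m:ℤ)+(k:ℤ))
    have n4 := NA (1 + (k:ℤ))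
    have m1 := NVA (1 - (k:ℤ)); have m2 := NVA (1 + (m:ℤ)); have m3 := NVA (1+(m:ℤ)+(k:ℤ))
    have m4 := NVA (1 + (k:ℤ))
    have c1 := NV (1 - (k:ℤ)); have c2 := NV (1 + (m:ℤ)); have c3 := NV (1+(m:ℤ)+(k:ℤ))
    have c4 := NV (1 + (k:ℤ))
    have d2 := NQ (1 + (m:ℤ)) (by omega); have d3 := NQ (1+(m:ℤ)+(k:ℤ)) (by omega)
    have d4 := NQ (1 + (k:ℤ)) (by omega)
    have hak : (a : ℂ) ^ k ≠ 0 := pow_ne_zero _ hane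
    set E := qPochInf (v ^ (-2:ℤ)) q with hE
    set A1 := qPochInf (q ^ (1 - (k:ℤ)) / a) q with hA1
    set A2 := qPochInf (q ^ (1 + (m:ℤ)) / a) q with hA2
    set A3 := qPochInf (q ^ (1 + (m:ℤ) + (k:ℤ)) / a) q with hA3
    set A4 := qPochInf (q / a) q with hA4
    set A5 := qPochInf (q ^ (1 + (k:ℤ)) / a) q with hA5
    set B1 := qPochInf (q ^ (1 - (k:ℤ)) * v ^ 2 / a) q with hB1
    set B2 := qPochInf (q ^ (1 + (m:ℤ)) * v ^ 2 / a) q with hB2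
    set B3 := qPochInf (q ^ (1 + (m:ℤ) + (k:ℤ)) * v ^ 2 / a) q with hB3
    set B4 := qPochInf (q * v ^ 2 / a) q with hB4
    set B5 := qPochInf (q ^ (1 + (k:ℤ)) * v ^ 2 / a) q with hB5
    set C1 := qPochInf (q ^ (1 - (k:ℤ)) * v ^ 2) q with hC1
    set C2 := qPochInf (q ^ (1 + (m:ℤ)) * v ^ 2) q with hC2
    set C3 := qPochInf (q ^ (1 + (m:ℤ) + (k:ℤ)) * v ^ 2) q with hC3
    set C4 := qPochInf (q * v ^ 2) q with hC4
    set C5 := qPochInf (q ^ (1 + (k:ℤ)) * v ^ 2) q with hC5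
    set D2 := qPochInf (q ^ (1 + (m:ℤ))) q with hD2
    set D3 := qPochInf (q ^ (1 + (m:ℤ) + (k:ℤ))) q with hD3
    set D4 := qPochInf q q with hD4
    set D5 := qPochInf (q ^ (1 + (k:ℤ))) q with hD5
    set FA := qPochInf a q with hFA
    set G := qPochInf (a / v ^ 2) q with hG
    clear_value E A1 A2 A3 A4 A5 B1 B2 B3 B4 B5 C1 C2 C3 C4 C5 D2 D3 D4 D5 FA G
    clear hE hA1 hA2 hA3 hA4 hA5 hB1 hB2 hB3 hB4 hB5 hC1 hC2 hC3 hC4 hC5 hD2 hD3 hD4 hD5 hFA hG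
    clear h1 h2 h3 h4 h5 h6 h7 h8 g1 g2 g3 g4 g5 g6 g7 g8 hv2 hav2 haq hqm NQ NA NV NVA
    have hpa : a ^ (2 * (m + k)) = a ^ (2 * m) * a ^ k * a ^ k := by
      rw [← pow_add, ← pow_add]; congr 1; ring
    rw [hpa, inv_mul_eq_div]
    simp only [div_mul_div_comm, mul_div_assoc', div_mul_eq_mul_div, div_div,
      div_div_eq_mul_div]
    rw [div_eq_div_iff (by apply_rules [mul_ne_zero, pow_ne_zero])
      (by apply_rules [mul_ne_zero, pow_ne_zero])]
    ring
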